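/- The largest eigenvalue of the adjacency matrix of a finite graph G is at least the average degree of G and at most the maximum degree of G; consequently the chromatic number of G is at most 1 plus the largest adjacency eigenvalue. -/

import Mathlib

open scoped Matrix

/-- The largest adjacency eigenvalue of a finite graph is at least the average degree
and at most the maximum degree; consequently the chromatic number is at most one plus
the largest adjacency eigenvalue. -/
theorem adjacency_eigenvalue_bounds
    {V : Type*} [Fintype V] [DecidableEq V] [Nonempty V]
    (G : SimpleGraph V) [DecidableRel G.Adj]
    (lammax : ℝ)
    (h_ev : ∃ x : V → ℝ, x ≠ 0 ∧ (G.adjMatrix ℝ).mulVec x = lammax • x)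
    (h_max : ∀ μ : ℝ, (∃ x : V → ℝ, x ≠ 0 ∧ (G.adjMatrix ℝ).mulVec x = μ • x) →
      μ ≤ lammax)
    (χ : ℕ) (hχ : G.chromaticNumber = χ) :
    (∑ v : V, (G.degree v : ℝ)) / (Fintype.card V : ℝ) ≤ lammax ∧
    lammax ≤ (G.maxDegree : ℝ) ∧
    (χ : ℝ) ≤ lammax + 1 := by
  classical
  set A : Matrix V V ℝ := G.adjMatrix ℝ with hAdef
  have hA : A.IsHermitian := by
    rw [Matrix.IsHermitian]
    ext i j
    simp [Matrix.conjTranspose_apply, SimpleGraph.adjMatrix_apply, SimpleGraph.adj_comm, A]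
  -- Key quadratic-form bound
  have quad : ∀ x : V → ℝ, x ⬝ᵥ (A *ᵥ x) ≤ lammax * (x ⬝ᵥ x) := by
    set B : Matrix V V ℝ := lammax • (1 : Matrix V V ℝ) - A with hBdef
    have hB : B.IsHermitian :=
      (IsSelfAdjoint.smul (star_trivial lammax) (Matrix.isHermitian_one (n := V) (α := ℝ) : IsSelfAdjoint (1 : Matrix V V ℝ))).sub hA
    have hBpsd : B.PosSemidef := by
      apply hB.posSemidef_iff_eigenvalues_nonneg.mpr
      intro i
      set v : V → ℝ := ⇑(hB.eigenvectorBasis i) with hvdef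
      have hv0 : v ≠ 0 := by
        intro h
        apply hB.eigenvectorBasis.orthonormal.ne_zero i
        ext j
        exact congrFun h j
      have hBv : B *ᵥ v = hB.eigenvalues i • v := hB.mulVec_eigenvectorBasis i
      have hAv : A *ᵥ v = (lammax - hB.eigenvalues i) • v := by
        have h1 : B *ᵥ v = lammax • v - A *ᵥ v := by
          rw [hBdef, Matrix.sub_mulVec, Matrix.smul_mulVec, Matrix.one_mulVec]
        have := hBv ▸ h1
        rw [sub_smul]
        linear_combination (norm := module) this
      have := h_max (lammax - hB.eigenvalues i) ⟨v, hv0, hAv⟩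
      change (0:ℝ) ≤ hB.eigenvalues i
      linarith
    intro x
    have h0 := hBpsd.dotProduct_mulVec_nonneg x
    rw [star_trivial] at h0
    have h1 : B *ᵥ x = lammax • x - A *ᵥ x := by
      rw [hBdef, Matrix.sub_mulVec, Matrix.smul_mulVec, Matrix.one_mulVec]
    rw [h1, dotProduct_sub, dotProduct_smul, smul_eq_mul] at h0
    linarith
  -- Part 1: average degree lower bound
  have hcard : (0:ℝ) < (Fintype.card V : ℝ) := by
    exact_mod_cast Fintype.card_pos
  have part1 : (∑ v : V, (G.degree v : ℝ)) / (Fintype.card V : ℝ) ≤ lammax := by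
    have h := quad (fun _ : V => 1)
    have hL : (fun _ : V => (1:ℝ)) ⬝ᵥ (A *ᵥ (fun _ => 1)) = ∑ v : V, (G.degree v : ℝ) := by
      simp only [dotProduct, one_mul, hAdef, SimpleGraph.adjMatrix_mulVec_apply,
        Finset.sum_const, nsmul_eq_mul, mul_one, SimpleGraph.card_neighborFinset_eq_degree]
    have hR : (fun _ : V => (1:ℝ)) ⬝ᵥ (fun _ : V => (1:ℝ)) = (Fintype.card V : ℝ) := by
      simp [dotProduct]
    rw [hL, hR] at h
    rw [div_le_iff₀ hcard]
    linarith
  -- Part 2: max degree upper bound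
  have part2 : lammax ≤ (G.maxDegree : ℝ) := by
    obtain ⟨x, hx0, hx⟩ := h_ev
    obtain ⟨v, -, hv⟩ := Finset.exists_max_image Finset.univ (fun u => |x u|) ⟨Classical.arbitrary V, Finset.mem_univ _⟩
    have hvpos : 0 < |x v| := by
      obtain ⟨u, hu⟩ : ∃ u, x u ≠ 0 := by
        by_contra h; push_neg at h; exact hx0 (funext h)
      exact lt_of_lt_of_le (abs_pos.mpr hu) (hv u (Finset.mem_univ u))
    have hxv : (A *ᵥ x) v = lammax * x v := by
      rw [hx]; simp
    have key : lammax * |x v| ≤ (G.maxDegree : ℝ) * |x v| := by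
      calc lammax * |x v| ≤ |lammax * x v| := by
            rw [abs_mul]
            exact mul_le_mul_of_nonneg_right (le_abs_self _) (abs_nonneg _)
        _ = |(A *ᵥ x) v| := by rw [hxv]
        _ = |∑ u ∈ G.neighborFinset v, x u| := by
            rw [SimpleGraph.adjMatrix_mulVec_apply]
        _ ≤ ∑ u ∈ G.neighborFinset v, |x u| := Finset.abs_sum_le_sum_abs _ _
        _ ≤ ∑ u ∈ G.neighborFinset v, |x v| :=
            Finset.sum_le_sum fun u _ => hv u (Finset.mem_univ u)
        _ = (G.degree v : ℝ) * |x v| := by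
            rw [Finset.sum_const, SimpleGraph.card_neighborFinset_eq_degree, nsmul_eq_mul]
        _ ≤ (G.maxDegree : ℝ) * |x v| := by
            apply mul_le_mul_of_nonneg_right _ (abs_nonneg _)
            exact_mod_cast G.degree_le_maxDegree v
    exact le_of_mul_le_mul_right key hvpos
  -- Part 3
  have part3 : (χ : ℝ) ≤ lammax + 1 := by
    have hlam0 : 0 ≤ lammax := le_trans (by positivity) part1
    rcases le_or_gt χ 1 with hχ1 | hχ2
    · have : (χ : ℝ) ≤ 1 := by exact_mod_cast hχ1
      linarith
    have hnotcol : ¬ G.Colorable (χ - 1) := by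
      intro hc
      have h := hc.chromaticNumber_le
      rw [hχ, Nat.cast_le] at h
      omega
    have hPuniv : ¬ (G.induce ((Finset.univ : Finset V) : Set V)).Colorable (χ - 1) := by
      intro hc
      apply hnotcol
      have e : G ↪g G.induce ((Finset.univ : Finset V) : Set V) := by
        rw [Finset.coe_univ]
        exact (SimpleGraph.induceUnivIso G).symm.toEmbedding
      exact SimpleGraph.Colorable.of_hom e.toHom hc
    obtain ⟨s, hsmem, hsmin⟩ := Finset.exists_min_image
      (Finset.univ.filter (fun t : Finset V => ¬ (G.induce (t : Set V)).Colorable (χ - 1)))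
      Finset.card ⟨Finset.univ, by simp only [Finset.mem_filter]; exact ⟨Finset.mem_univ _, hPuniv⟩⟩
    rw [Finset.mem_filter] at hsmem
    have hsP : ¬ (G.induce (s : Set V)).Colorable (χ - 1) := hsmem.2
    have hmin : ∀ t : Finset V, t.card < s.card → (G.induce (t : Set V)).Colorable (χ - 1) := by
      intro t hlt
      by_contra hPt
      exact absurd (hsmin t (Finset.mem_filter.mpr ⟨Finset.mem_univ _, hPt⟩)) (by omega)
    have hsne : s.Nonempty := by
      rcases s.eq_empty_or_nonempty with rfl | h
      · exfalso
        apply hsP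
        have : IsEmpty (((∅ : Finset V) : Set V) : Type _) := by simp
        exact SimpleGraph.Colorable.of_isEmpty _
      · exact h
    have hdeg : ∀ v ∈ s, χ - 1 ≤ (G.neighborFinset v ∩ s).card := by
      intro v hv
      by_contra hcard
      push_neg at hcard
      obtain ⟨C⟩ := hmin (s.erase v) (Finset.card_erase_lt_of_mem hv)
      have hmem : ∀ u ∈ G.neighborFinset v ∩ s, u ∈ ((s.erase v : Finset V) : Set V) := by
        intro u hu
        rw [Finset.mem_inter, SimpleGraph.mem_neighborFinset] at hu
        simp only [Finset.coe_erase, Set.mem_diff, Finset.mem_coe, Set.mem_singleton_iff]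
        exact ⟨hu.2, fun h => (G.ne_of_adj hu.1) h.symm⟩
      set used : Finset (Fin (χ - 1)) :=
        (G.neighborFinset v ∩ s).attach.image (fun u => C ⟨u.1, hmem u.1 u.2⟩) with husedDef
      have husedcard : used.card < χ - 1 := by
        have h1 := Finset.card_image_le (s := (G.neighborFinset v ∩ s).attach)
          (f := fun u => C ⟨u.1, hmem u.1 u.2⟩)
        rw [Finset.card_attach] at h1
        rw [husedDef]
        omega
      obtain ⟨c, hc⟩ : ∃ c : Fin (χ - 1), c ∉ used := by
        by_contra h
        push_neg at h
        have := Finset.eq_univ_iff_forall.mpr h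
        rw [this, Finset.card_univ, Fintype.card_fin] at husedcard
        omega
      have hmem2 : ∀ u : ((s : Set V) : Type _), (u : V) ≠ v →
          (u : V) ∈ ((s.erase v : Finset V) : Set V) := by
        intro u hu
        simp only [Finset.coe_erase, Set.mem_diff, Finset.mem_coe, Set.mem_singleton_iff]
        exact ⟨u.2, hu⟩
      apply hsP
      refine ⟨SimpleGraph.Coloring.mk
        (fun u => if h : (u : V) = v then c else C ⟨(u : V), hmem2 u h⟩) ?_⟩
      rintro ⟨a, ha⟩ ⟨b, hb⟩ hab
      have hab' : G.Adj a b := hab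
      by_cases h1 : a = v <;> by_cases h2 : b = v
      · subst h1; subst h2; exact absurd hab' (G.irrefl)
      · subst h1
        simp only [dif_pos, dif_neg h2]
        intro hEq
        apply hc
        rw [husedDef, Finset.mem_image]
        refine ⟨⟨b, ?_⟩, Finset.mem_attach _ _, hEq.symm⟩
        rw [Finset.mem_inter, SimpleGraph.mem_neighborFinset]
        exact ⟨hab', Finset.mem_coe.mp hb⟩
      · subst h2
        simp only [dif_pos, dif_neg h1]
        intro hEq
        apply hc
        rw [husedDef, Finset.mem_image]
        refine ⟨⟨a, ?_⟩, Finset.mem_attach _ _, hEq⟩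
        rw [Finset.mem_inter, SimpleGraph.mem_neighborFinset]
        exact ⟨hab'.symm, Finset.mem_coe.mp ha⟩
      · simp only [dif_neg h1, dif_neg h2]
        exact C.valid hab'
    -- quadratic form with the indicator vector of s
    set x : V → ℝ := fun u => if u ∈ s then 1 else 0 with hxdef
    have hA1 : ∀ v : V, (A *ᵥ x) v = ((G.neighborFinset v ∩ s).card : ℝ) := by
      intro v
      rw [hAdef, SimpleGraph.adjMatrix_mulVec_apply, hxdef]
      rw [Finset.sum_ite_mem]
      simp
    have hR : x ⬝ᵥ x = (s.card : ℝ) := by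
      rw [dotProduct, hxdef]
      simp only [ite_mul, one_mul, zero_mul]
      rw [Finset.sum_ite_mem, Finset.univ_inter]
      simp
    have hL : x ⬝ᵥ (A *ᵥ x) = ∑ v ∈ s, ((G.neighborFinset v ∩ s).card : ℝ) := by
      rw [dotProduct]
      rw [Finset.sum_congr rfl (fun v _ => by rw [hA1 v])]
      simp only [hxdef, ite_mul, one_mul, zero_mul]
      rw [Finset.sum_ite_mem, Finset.univ_inter]
    have h := quad x
    rw [hL, hR] at h
    have hsum : (s.card : ℝ) * ((χ : ℝ) - 1) ≤ ∑ v ∈ s, ((G.neighborFinset v ∩ s).card : ℝ) := by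
      calc (s.card : ℝ) * ((χ : ℝ) - 1) = ∑ _v ∈ s, ((χ : ℝ) - 1) := by
            rw [Finset.sum_const, nsmul_eq_mul]
        _ ≤ ∑ v ∈ s, ((G.neighborFinset v ∩ s).card : ℝ) := by
            apply Finset.sum_le_sum
            intro v hv
            have h1 := hdeg v hv
            have h2 : ((χ - 1 : ℕ) : ℝ) ≤ ((G.neighborFinset v ∩ s).card : ℝ) := by
              exact_mod_cast h1
            rw [Nat.cast_sub (by omega)] at h2
            simpa using h2
    have hscard : (0 : ℝ) < (s.card : ℝ) := by
      exact_mod_cast Finset.card_pos.mpr hsne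
    nlinarith [hsum, h, hscard]
  exact ⟨part1, part2, part3⟩
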